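/- In the interactive communication setting where ω is common randomness independent of i.i.d. sources (X_1^n, X_2^n), and C_i satisfies C_i — ω C_{[1:i-1]} X_2^n — X_1^n for even i, the following chain of (in)equalities holds: ∑_{i odd} H(C_i) ≥ I(ω C_{[1:r]}; X_1^n | X_2^n) = ∑_{q=1}^n I(ω C_{[1:r]} X_1^{q+1:n} X_{2,∼q}; X_{1,q} | X_{2,q}) ≥ n·I(F_{[1:r]}; X_1 | X_2), where Q is uniform on [1:n] independent of everything, F_i := (ω, C_i, X_1^{Q+1:n}, X_2^{1:Q-1}, Q), X_1 := X_{1,Q}, X_2 := X_{2,Q}. -/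

import Mathlib

set_option synthInstance.maxSize 2000
set_option synthInstance.maxHeartbeats 1000000

open Finset

/-- Total variation distance between two pmfs on a finite set: half the ℓ¹ distance. -/
noncomputable def TV {α : Type*} [Fintype α] (p q : α → ℝ) : ℝ :=
  (∑ a, |p a - q a|) / 2

/-- Shannon entropy of a pmf. -/
noncomputable def ent {α : Type*} [Fintype α] (p : α → ℝ) : ℝ :=
  -∑ a, p a * Real.log (p a)

/-- Binary entropy function. -/
noncomputable def hb (t : ℝ) : ℝ := -t * Real.log t - (1 - t) * Real.log (1 - t)

/-- `p` is a probability mass function. -/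
def IsPMF {α : Type*} [Fintype α] (p : α → ℝ) : Prop :=
  (∀ a, 0 ≤ p a) ∧ ∑ a, p a = 1

/-- Pushforward pmf (distribution of the random variable `X` under `μ`). -/
noncomputable def pushf {Ω α : Type*} [Fintype Ω] [DecidableEq α]
    (μ : Ω → ℝ) (X : Ω → α) : α → ℝ :=
  fun a => ∑ ω ∈ Finset.univ.filter (fun ω => X ω = a), μ ω

/-- Entropy of a random variable `X` on a finite probability space with pmf `μ`. -/
noncomputable def Hent {Ω α : Type*} [Fintype Ω] [Fintype α] [DecidableEq α]
    (μ : Ω → ℝ) (X : Ω → α) : ℝ := ent (pushf μ X)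

/-- Conditional mutual information `I(A ; C | B)` of random variables on a finite
probability space with pmf `μ`, defined via entropies:
`I(A;C|B) = H(A,B) + H(B,C) - H(A,B,C) - H(B)`. -/
noncomputable def condMI {Ω α β γ : Type*} [Fintype Ω] [Fintype α] [Fintype β] [Fintype γ]
    [DecidableEq α] [DecidableEq β] [DecidableEq γ]
    (μ : Ω → ℝ) (A : Ω → α) (B : Ω → β) (C : Ω → γ) : ℝ :=
  Hent μ (fun ω => (A ω, B ω)) + Hent μ (fun ω => (B ω, C ω))
    - Hent μ (fun ω => (A ω, B ω, C ω)) - Hent μ B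

section API
variable {Ω α β γ : Type*} [Fintype Ω]

lemma pushf_nonneg [DecidableEq α] {μ : Ω → ℝ} (hμ : ∀ ω, 0 ≤ μ ω) (X : Ω → α) (a : α) :
    0 ≤ pushf μ X a :=
  Finset.sum_nonneg fun ω _ => hμ ω

lemma sum_pushf [Fintype α] [DecidableEq α] (μ : Ω → ℝ) (X : Ω → α) :
    ∑ a, pushf μ X a = ∑ ω, μ ω := by
  simpa [pushf] using Finset.sum_fiberwise (Finset.univ : Finset Ω) X μ

lemma pushf_comp [DecidableEq α] [Fintype α] [DecidableEq β] (μ : Ω → ℝ) (X : Ω → α)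
    (F : α → β) : pushf μ (fun ω => F (X ω)) = pushf (pushf μ X) F := by
  funext b
  calc pushf μ (fun ω => F (X ω)) b
      = ∑ ω, if F (X ω) = b then μ ω else 0 := by rw [pushf, Finset.sum_filter]
    _ = ∑ a, ∑ ω ∈ Finset.univ.filter (fun ω => X ω = a), (if F (X ω) = b then μ ω else 0) :=
        (Finset.sum_fiberwise _ X _).symm
    _ = ∑ a, (if F a = b then pushf μ X a else 0) := by
        refine Finset.sum_congr rfl fun a _ => ?_
        rw [pushf]
        by_cases h : F a = b
        · simp only [h, if_true]
          refine Finset.sum_congr rfl fun ω hω => ?_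
          rw [Finset.mem_filter] at hω
          rw [hω.2, h, if_pos rfl]
        · simp only [h, if_false]
          refine Finset.sum_eq_zero fun ω hω => ?_
          rw [Finset.mem_filter] at hω
          rw [hω.2, if_neg h]
    _ = pushf (pushf μ X) F b := by rw [pushf, Finset.sum_filter]

lemma marg_fst [DecidableEq α] [DecidableEq β] [Fintype β] (μ : Ω → ℝ)
    (X : Ω → α) (Y : Ω → β) (a : α) :
    pushf μ X a = ∑ b, pushf μ (fun ω => (X ω, Y ω)) (a, b) := by
  rw [pushf]
  rw [← Finset.sum_fiberwise (Finset.univ.filter (fun ω => X ω = a)) Y μ]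
  refine Finset.sum_congr rfl fun b _ => ?_
  rw [pushf, Finset.filter_filter]
  refine Finset.sum_congr ?_ fun _ _ => rfl
  refine Finset.filter_congr fun ω _ => ?_
  simp [Prod.ext_iff, and_comm]

lemma marg_snd [DecidableEq α] [DecidableEq β] [Fintype α] (μ : Ω → ℝ)
    (X : Ω → α) (Y : Ω → β) (b : β) :
    pushf μ Y b = ∑ a, pushf μ (fun ω => (X ω, Y ω)) (a, b) := by
  rw [pushf]
  rw [← Finset.sum_fiberwise (Finset.univ.filter (fun ω => Y ω = b)) X μ]
  refine Finset.sum_congr rfl fun a _ => ?_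
  rw [pushf, Finset.filter_filter]
  refine Finset.sum_congr ?_ fun _ _ => rfl
  refine Finset.filter_congr fun ω _ => ?_
  simp [Prod.ext_iff, and_comm]

end API
section API2
variable {Ω α β γ δ : Type*} [Fintype Ω]

lemma ent_map [Fintype α] [DecidableEq α] [Fintype β] [DecidableEq β]
    {p : α → ℝ} (hp : ∀ a, 0 ≤ p a) {e : α → β}
    (he : ∀ a a', p a ≠ 0 → p a' ≠ 0 → e a = e a' → a = a') :
    ent (pushf p e) = ent p := by
  have key : ∀ a : α, p a ≠ 0 → pushf p e (e a) = p a := by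
    intro a ha
    rw [pushf]
    rw [Finset.sum_eq_single_of_mem a (by simp)]
    intro a' _ hne
    by_contra h'
    rcases Finset.mem_filter.mp ‹a' ∈ _› with ⟨_, h2⟩
    exact hne (he a' a h' ha h2)
  rw [ent, ent]
  congr 1
  calc ∑ b, pushf p e b * Real.log (pushf p e b)
      = ∑ b, ∑ a ∈ Finset.univ.filter (fun a => e a = b), p a * Real.log (pushf p e b) := by
        refine Finset.sum_congr rfl fun b _ => ?_
        rw [pushf, Finset.sum_mul]
    _ = ∑ a, p a * Real.log (pushf p e (e a)) := by
        rw [← Finset.sum_fiberwise (Finset.univ : Finset α) e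
          (fun a => p a * Real.log (pushf p e (e a)))]
        refine Finset.sum_congr rfl fun b _ => Finset.sum_congr rfl fun a ha => ?_
        rcases Finset.mem_filter.mp ha with ⟨_, h2⟩
        rw [h2]
    _ = ∑ a, p a * Real.log (p a) := by
        refine Finset.sum_congr rfl fun a _ => ?_
        by_cases h : p a = 0
        · rw [h]; ring
        · rw [key a h]

/-- Mutual determination of two random variables. -/
def Deq (X : Ω → α) (Y : Ω → β) : Prop :=
  ∃ e : α → β, ∃ d : β → α, (∀ ω, Y ω = e (X ω)) ∧ (∀ ω, X ω = d (Y ω))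

lemma Deq.refl (X : Ω → α) : Deq X X := ⟨id, id, fun _ => rfl, fun _ => rfl⟩

lemma Deq.symm {X : Ω → α} {Y : Ω → β} (h : Deq X Y) : Deq Y X := by
  obtain ⟨e, d, h1, h2⟩ := h; exact ⟨d, e, h2, h1⟩

lemma Deq.trans {X : Ω → α} {Y : Ω → β} {Z : Ω → γ} (h : Deq X Y) (h' : Deq Y Z) : Deq X Z := by
  obtain ⟨e, d, h1, h2⟩ := h; obtain ⟨e', d', h1', h2'⟩ := h'
  exact ⟨e' ∘ e, d ∘ d', fun ω => by simp [h1' ω, h1 ω], fun ω => by simp [h2 ω, h2' ω]⟩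

lemma Deq.pair {X : Ω → α} {Y : Ω → β} {X' : Ω → γ} {Y' : Ω → δ}
    (h : Deq X X') (h' : Deq Y Y') :
    Deq (fun ω => (X ω, Y ω)) (fun ω => (X' ω, Y' ω)) := by
  obtain ⟨e, d, h1, h2⟩ := h; obtain ⟨e', d', h1', h2'⟩ := h'
  exact ⟨Prod.map e e', Prod.map d d',
    fun ω => by simp [Prod.map, h1 ω, h1' ω],
    fun ω => by simp [Prod.map, h2 ω, h2' ω]⟩

lemma Deq.comp {X : Ω → α} {Y : Ω → β} (e : α → β) (d : β → α)
    (h1 : ∀ ω, Y ω = e (X ω)) (h2 : ∀ ω, X ω = d (Y ω)) : Deq X Y := ⟨e, d, h1, h2⟩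

lemma Hent_congr [Fintype α] [DecidableEq α] [Fintype β] [DecidableEq β]
    {μ : Ω → ℝ} (hμ : ∀ ω, 0 ≤ μ ω) {X : Ω → α} {Y : Ω → β} (h : Deq X Y) :
    Hent μ X = Hent μ Y := by
  obtain ⟨e, d, h1, h2⟩ := h
  have hY : Y = fun ω => e (X ω) := funext h1
  have h3 : Hent μ Y = ent (pushf (pushf μ X) e) := by
    rw [Hent, hY, pushf_comp]
  rw [h3, Hent]
  refine (ent_map (pushf_nonneg hμ X) ?_).symm
  intro a a' ha ha' hee
  rw [pushf] at ha ha'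
  obtain ⟨ω, hω, -⟩ := Finset.exists_ne_zero_of_sum_ne_zero ha
  obtain ⟨ω', hω', -⟩ := Finset.exists_ne_zero_of_sum_ne_zero ha'
  obtain rfl : X ω = a := (Finset.mem_filter.mp hω).2
  obtain rfl : X ω' = a' := (Finset.mem_filter.mp hω').2
  calc X ω = d (e (X ω)) := by rw [← h1 ω, ← h2 ω]
    _ = d (e (X ω')) := by rw [hee]
    _ = X ω' := by rw [← h1 ω', ← h2 ω']

lemma condMI_congr {α' β' γ' : Type*} [Fintype α] [DecidableEq α] [Fintype β] [DecidableEq β]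
    [Fintype γ] [DecidableEq γ] [Fintype α'] [DecidableEq α'] [Fintype β'] [DecidableEq β']
    [Fintype γ'] [DecidableEq γ']
    {μ : Ω → ℝ} (hμ : ∀ ω, 0 ≤ μ ω) {A : Ω → α} {B : Ω → β} {C : Ω → γ}
    {A' : Ω → α'} {B' : Ω → β'} {C' : Ω → γ'}
    (hA : Deq A A') (hB : Deq B B') (hC : Deq C C') :
    condMI μ A B C = condMI μ A' B' C' := by
  rw [condMI, condMI, Hent_congr hμ (hA.pair hB), Hent_congr hμ (hB.pair hC),
    Hent_congr hμ (hA.pair (hB.pair hC)), Hent_congr hμ hB]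
end API2
section API3
variable {Ω α β γ δ : Type*} [Fintype Ω]
variable [Fintype α] [DecidableEq α] [Fintype β] [DecidableEq β]
  [Fintype γ] [DecidableEq γ] [Fintype δ] [DecidableEq δ]
variable {μ : Ω → ℝ}

lemma condMI_comm (hμ : ∀ ω, 0 ≤ μ ω) (A : Ω → α) (B : Ω → β) (C : Ω → γ) :
    condMI μ A B C = condMI μ C B A := by
  rw [condMI, condMI]
  rw [Hent_congr hμ (X := fun ω => (A ω, B ω)) (Y := fun ω => (B ω, A ω))
      (Deq.comp (fun z => (z.2, z.1)) (fun z => (z.2, z.1)) (fun _ => rfl) (fun _ => rfl)),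
    Hent_congr hμ (X := fun ω => (B ω, C ω)) (Y := fun ω => (C ω, B ω))
      (Deq.comp (fun z => (z.2, z.1)) (fun z => (z.2, z.1)) (fun _ => rfl) (fun _ => rfl)),
    Hent_congr hμ (X := fun ω => (A ω, B ω, C ω)) (Y := fun ω => (C ω, B ω, A ω))
      (Deq.comp (fun z => (z.2.2, z.2.1, z.1)) (fun z => (z.2.2, z.2.1, z.1))
        (fun _ => rfl) (fun _ => rfl))]
  ring

/-- Chain rule: `I(A A' ; C | B) = I(A ; C | B) + I(A' ; C | B A)`. -/
lemma condMI_chain (hμ : ∀ ω, 0 ≤ μ ω) (A : Ω → α) (A' : Ω → δ) (B : Ω → β) (C : Ω → γ) :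
    condMI μ (fun ω => (A ω, A' ω)) B C
      = condMI μ A B C + condMI μ A' (fun ω => (B ω, A ω)) C := by
  rw [condMI, condMI, condMI]
  rw [Hent_congr hμ (X := fun ω => (A' ω, (B ω, A ω))) (Y := fun ω => ((A ω, A' ω), B ω))
      (Deq.comp (fun z => ((z.2.2, z.1), z.2.1)) (fun z => (z.1.2, (z.2, z.1.1)))
        (fun _ => rfl) (fun _ => rfl)),
    Hent_congr hμ (X := fun ω => ((B ω, A ω), C ω)) (Y := fun ω => (A ω, B ω, C ω))
      (Deq.comp (fun z => (z.1.2, z.1.1, z.2)) (fun z => ((z.2.1, z.1), z.2.2))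
        (fun _ => rfl) (fun _ => rfl)),
    Hent_congr hμ (X := fun ω => (A' ω, (B ω, A ω), C ω)) (Y := fun ω => ((A ω, A' ω), B ω, C ω))
      (Deq.comp (fun z => ((z.2.1.2, z.1), z.2.1.1, z.2.2)) (fun z => (z.1.2, (z.2.1, z.1.1), z.2.2))
        (fun _ => rfl) (fun _ => rfl)),
    Hent_congr hμ (X := (fun ω => (B ω, A ω))) (Y := fun ω => (A ω, B ω))
      (Deq.comp (fun z => (z.2, z.1)) (fun z => (z.2, z.1)) (fun _ => rfl) (fun _ => rfl))]
  ring

/-- Chain rule on the other side: `I(A ; C C' | B) = I(A ; C | B) + I(A ; C' | B C)`. -/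
lemma condMI_chainC (hμ : ∀ ω, 0 ≤ μ ω) (A : Ω → α) (B : Ω → β) (C : Ω → γ) (C' : Ω → δ) :
    condMI μ A B (fun ω => (C ω, C' ω))
      = condMI μ A B C + condMI μ A (fun ω => (B ω, C ω)) C' := by
  rw [condMI_comm hμ A B (fun ω => (C ω, C' ω)),
    condMI_chain hμ C C' B A,
    condMI_comm hμ C B A, condMI_comm hμ C' (fun ω => (B ω, C ω)) A]

end API3
section API4
variable {Ω α β γ δ : Type*} [Fintype Ω]
variable [Fintype α] [DecidableEq α] [Fintype β] [DecidableEq β]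
  [Fintype γ] [DecidableEq γ] [Fintype δ] [DecidableEq δ]
variable {μ : Ω → ℝ}

lemma real_aux {t x y z : ℝ} (ht : 0 ≤ t) (hx : t ≤ x) (hy : t ≤ y) (hz : x ≤ z) :
    t - x * y / z ≤ t * Real.log t + t * Real.log z - t * Real.log x - t * Real.log y := by
  rcases eq_or_lt_of_le ht with h0 | hpos
  · have hx0 : 0 ≤ x := le_trans ht hx
    have hy0 : 0 ≤ y := le_trans ht hy
    have hz0 : 0 ≤ z := le_trans hx0 hz
    rw [← h0]
    simp only [zero_mul, sub_zero, add_zero, zero_sub, zero_add]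
    have : 0 ≤ x * y / z := div_nonneg (mul_nonneg hx0 hy0) hz0
    linarith
  · have hx0 : 0 < x := lt_of_lt_of_le hpos hx
    have hy0 : 0 < y := lt_of_lt_of_le hpos hy
    have hz0 : 0 < z := lt_of_lt_of_le hx0 hz
    have harg : 0 < x * y / (t * z) := by positivity
    have hlog := Real.log_le_sub_one_of_pos harg
    have hmul := mul_le_mul_of_nonneg_left hlog (le_of_lt hpos)
    have heq1 : t * (x * y / (t * z)) = x * y / z := by field_simp
    have heq2 : Real.log (x * y / (t * z)) =
        Real.log x + Real.log y - Real.log t - Real.log z := by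
      rw [Real.log_div (by positivity) (by positivity), Real.log_mul (ne_of_gt hx0) (ne_of_gt hy0),
        Real.log_mul (ne_of_gt hpos) (ne_of_gt hz0)]
      ring
    rw [heq2] at hmul
    nlinarith [hmul]

lemma pushf_assoc (μ : Ω → ℝ) (A : Ω → α) (B : Ω → β) (C : Ω → γ) (a : α) (b : β) (c : γ) :
    pushf μ (fun ω => ((A ω, B ω), C ω)) ((a, b), c)
      = pushf μ (fun ω => (A ω, B ω, C ω)) (a, b, c) := by
  rw [pushf, pushf]
  refine Finset.sum_congr (Finset.filter_congr fun ω _ => ?_) fun _ _ => rfl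
  simp [Prod.ext_iff, and_assoc]

lemma sum_pushf_triple (hμ1 : ∑ ω, μ ω = 1) (A : Ω → α) (B : Ω → β) (C : Ω → γ) :
    ∑ a, ∑ b, ∑ c, pushf μ (fun ω => (A ω, B ω, C ω)) (a, b, c) = 1 := by
  rw [← hμ1, ← sum_pushf μ (fun ω => (A ω, B ω, C ω))]
  rw [Fintype.sum_prod_type]
  exact Finset.sum_congr rfl fun a _ => by rw [Fintype.sum_prod_type]

lemma condMI_nonneg (hμ0 : ∀ ω, 0 ≤ μ ω) (hμ1 : ∑ ω, μ ω = 1)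
    (A : Ω → α) (B : Ω → β) (C : Ω → γ) : 0 ≤ condMI μ A B C := by
  set t : α × β × γ → ℝ := pushf μ (fun ω => (A ω, B ω, C ω)) with ht
  set pab : α × β → ℝ := pushf μ (fun ω => (A ω, B ω)) with hpab
  set pbc : β × γ → ℝ := pushf μ (fun ω => (B ω, C ω)) with hpbc
  set pb : β → ℝ := pushf μ B with hpb
  have t0 : ∀ z, 0 ≤ t z := pushf_nonneg hμ0 _
  have pab0 : ∀ z, 0 ≤ pab z := pushf_nonneg hμ0 _
  have pbc0 : ∀ z, 0 ≤ pbc z := pushf_nonneg hμ0 _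
  have hmab : ∀ a b, pab (a, b) = ∑ c, t (a, b, c) := by
    intro a b
    rw [hpab, marg_fst μ (fun ω => (A ω, B ω)) C (a, b)]
    exact Finset.sum_congr rfl fun c _ => pushf_assoc μ A B C a b c
  have hmbc : ∀ b c, pbc (b, c) = ∑ a, t (a, b, c) := by
    intro b c
    rw [hpbc, marg_snd μ A (fun ω => (B ω, C ω)) (b, c)]
  have hmb : ∀ b, pb b = ∑ a, pab (a, b) := by
    intro b
    rw [hpb, marg_snd μ A B b]
  have hmb' : ∀ b, pb b = ∑ c, pbc (b, c) := by
    intro b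
    rw [hpb, marg_fst μ B C b]
  -- express condMI as a triple sum
  have hHab : Hent μ (fun ω => (A ω, B ω)) = -∑ a, ∑ b, ∑ c, t (a,b,c) * Real.log (pab (a,b)) := by
    rw [Hent, ent, Fintype.sum_prod_type]
    congr 1
    refine Finset.sum_congr rfl fun a _ => Finset.sum_congr rfl fun b _ => ?_
    rw [show pushf μ (fun ω => (A ω, B ω)) (a, b) = pab (a,b) from rfl, hmab a b, Finset.sum_mul]
  have hHbc : Hent μ (fun ω => (B ω, C ω)) = -∑ a, ∑ b, ∑ c, t (a,b,c) * Real.log (pbc (b,c)) := by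
    rw [Hent, ent, Fintype.sum_prod_type]
    congr 1
    calc ∑ b, ∑ c, pushf μ (fun ω => (B ω, C ω)) (b, c) * Real.log (pushf μ (fun ω => (B ω, C ω)) (b, c))
        = ∑ b, ∑ c, ∑ a, t (a,b,c) * Real.log (pbc (b,c)) := by
          refine Finset.sum_congr rfl fun b _ => Finset.sum_congr rfl fun c _ => ?_
          rw [show pushf μ (fun ω => (B ω, C ω)) (b, c) = pbc (b,c) from rfl, hmbc b c,
            Finset.sum_mul]
      _ = ∑ b, ∑ a, ∑ c, t (a,b,c) * Real.log (pbc (b,c)) :=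
          Finset.sum_congr rfl fun b _ => Finset.sum_comm
      _ = ∑ a, ∑ b, ∑ c, t (a,b,c) * Real.log (pbc (b,c)) := Finset.sum_comm
  have hHabc : Hent μ (fun ω => (A ω, B ω, C ω))
      = -∑ a, ∑ b, ∑ c, t (a,b,c) * Real.log (t (a,b,c)) := by
    rw [Hent, ent, Fintype.sum_prod_type]
    congr 1
    exact Finset.sum_congr rfl fun a _ => by rw [Fintype.sum_prod_type]
  have hHb : Hent μ B = -∑ a, ∑ b, ∑ c, t (a,b,c) * Real.log (pb b) := by
    rw [Hent, ent]
    congr 1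
    calc ∑ b, pushf μ B b * Real.log (pushf μ B b)
        = ∑ b, ∑ a, ∑ c, t (a,b,c) * Real.log (pb b) := by
          refine Finset.sum_congr rfl fun b _ => ?_
          have key : ∀ K : ℝ, ∑ a, ∑ c, t (a,b,c) * K = pb b * K := by
            intro K
            calc ∑ a, ∑ c, t (a,b,c) * K = ∑ a, (∑ c, t (a,b,c)) * K :=
                  Finset.sum_congr rfl fun a _ => (Finset.sum_mul _ _ _).symm
              _ = (∑ a, ∑ c, t (a,b,c)) * K := (Finset.sum_mul _ _ _).symm
              _ = pb b * K := by
                  rw [hmb b]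
                  congr 1
                  exact Finset.sum_congr rfl fun a _ => (hmab a b).symm
          exact (key (Real.log (pb b))).symm
      _ = ∑ a, ∑ b, ∑ c, t (a,b,c) * Real.log (pb b) := Finset.sum_comm
  have hCMI : condMI μ A B C
      = ∑ a, ∑ b, ∑ c, (t (a,b,c) * Real.log (t (a,b,c)) + t (a,b,c) * Real.log (pb b)
          - t (a,b,c) * Real.log (pab (a,b)) - t (a,b,c) * Real.log (pbc (b,c))) := by
    rw [condMI, hHab, hHbc, hHabc, hHb]
    simp only [Finset.sum_sub_distrib, Finset.sum_add_distrib]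
    ring
  rw [hCMI]
  have hbound : ∑ a, ∑ b, ∑ c, (t (a,b,c) - pab (a,b) * pbc (b,c) / pb b)
      ≤ ∑ a, ∑ b, ∑ c, (t (a,b,c) * Real.log (t (a,b,c)) + t (a,b,c) * Real.log (pb b)
          - t (a,b,c) * Real.log (pab (a,b)) - t (a,b,c) * Real.log (pbc (b,c))) := by
    refine Finset.sum_le_sum fun a _ => Finset.sum_le_sum fun b _ => Finset.sum_le_sum fun c _ => ?_
    refine real_aux (t0 _) ?_ ?_ ?_
    · rw [hmab a b]
      exact Finset.single_le_sum (fun c' _ => t0 (a,b,c')) (Finset.mem_univ c)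
    · rw [hmbc b c]
      exact Finset.single_le_sum (fun a' _ => t0 (a',b,c)) (Finset.mem_univ a)
    · rw [hmb b]
      exact Finset.single_le_sum (fun a' _ => pab0 (a',b)) (Finset.mem_univ a)
  refine le_trans ?_ hbound
  have hsplit : ∑ a, ∑ b, ∑ c, (t (a,b,c) - pab (a,b) * pbc (b,c) / pb b)
      = (∑ a, ∑ b, ∑ c, t (a,b,c)) - ∑ a, ∑ b, ∑ c, pab (a,b) * pbc (b,c) / pb b := by
    simp only [Finset.sum_sub_distrib]
  rw [hsplit, sum_pushf_triple hμ1 A B C]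
  have : ∑ a, ∑ b, ∑ c, pab (a,b) * pbc (b,c) / pb b = ∑ b, pb b := by
    calc ∑ a, ∑ b, ∑ c, pab (a,b) * pbc (b,c) / pb b
        = ∑ b, ∑ a, ∑ c, pab (a,b) * pbc (b,c) / pb b := Finset.sum_comm
      _ = ∑ b, pb b := by
          refine Finset.sum_congr rfl fun b _ => ?_
          by_cases hb : pb b = 0
          · rw [hb]
            refine Finset.sum_eq_zero fun a _ => Finset.sum_eq_zero fun c _ => ?_
            have h1 : pab (a, b) = 0 := le_antisymm (by
              rw [← hb, hmb b]
              exact Finset.single_le_sum (fun a' _ => pab0 (a',b)) (Finset.mem_univ a)) (pab0 _)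
            rw [h1, zero_mul, zero_div]
          · have : ∑ a, ∑ c, pab (a,b) * pbc (b,c) / pb b
                = (∑ a, pab (a,b)) * (∑ c, pbc (b,c)) / pb b := by
              rw [Finset.sum_mul, Finset.sum_div]
              refine Finset.sum_congr rfl fun a _ => ?_
              rw [Finset.mul_sum, Finset.sum_div]
            rw [this, ← hmb b, ← hmb' b]
            field_simp
  rw [this, hpb, sum_pushf μ B, hμ1]
  norm_num

end API4
section API5
variable {Ω α β γ δ : Type*} [Fintype Ω]
variable [Fintype α] [DecidableEq α] [Fintype β] [DecidableEq β]
  [Fintype γ] [DecidableEq γ] [Fintype δ] [DecidableEq δ]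
variable {μ : Ω → ℝ}

lemma Hent_le_Hent_pair (hμ0 : ∀ ω, 0 ≤ μ ω) (X : Ω → α) (Y : Ω → β) :
    Hent μ X ≤ Hent μ (fun ω => (X ω, Y ω)) := by
  set t : α × β → ℝ := pushf μ (fun ω => (X ω, Y ω)) with ht
  set pX : α → ℝ := pushf μ X with hpX
  have t0 : ∀ z, 0 ≤ t z := pushf_nonneg hμ0 _
  have hm : ∀ a, pX a = ∑ b, t (a, b) := fun a => marg_fst μ X Y a
  rw [Hent, Hent, ent, ent, Fintype.sum_prod_type, neg_le_neg_iff]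
  calc ∑ a, ∑ b, t (a,b) * Real.log (t (a,b))
      ≤ ∑ a, ∑ b, t (a,b) * Real.log (pX a) := by
        refine Finset.sum_le_sum fun a _ => Finset.sum_le_sum fun b _ => ?_
        rcases eq_or_lt_of_le (t0 (a,b)) with h0 | hpos
        · rw [← h0]; simp
        · have hle : t (a,b) ≤ pX a := by
            rw [hm a]
            exact Finset.single_le_sum (fun b' _ => t0 (a,b')) (Finset.mem_univ b)
          exact mul_le_mul_of_nonneg_left
            (Real.log_le_log (by exact hpos) hle) (le_of_lt hpos)
    _ = ∑ a, pX a * Real.log (pX a) := by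
        refine Finset.sum_congr rfl fun a _ => ?_
        rw [hm a, Finset.sum_mul]

lemma Hent_const (hμ1 : ∑ ω, μ ω = 1) (c : α) : Hent μ (fun _ : Ω => c) = 0 := by
  rw [Hent, ent, neg_eq_zero]
  refine Finset.sum_eq_zero fun a _ => ?_
  by_cases h : c = a
  · have : pushf μ (fun _ : Ω => c) a = 1 := by
      rw [pushf, Finset.filter_true_of_mem (fun ω _ => h), hμ1]
    rw [this]; simp
  · have : pushf μ (fun _ : Ω => c) a = 0 := by
      rw [pushf, Finset.filter_false_of_mem (fun ω _ => h), Finset.sum_empty]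
    rw [this]; simp

lemma Hent_pair_le_add (hμ0 : ∀ ω, 0 ≤ μ ω) (hμ1 : ∑ ω, μ ω = 1) (X : Ω → α) (Y : Ω → β) :
    Hent μ (fun ω => (X ω, Y ω)) ≤ Hent μ X + Hent μ Y := by
  have h := condMI_nonneg hμ0 hμ1 X (fun _ : Ω => ()) Y
  rw [condMI] at h
  rw [Hent_congr hμ0 (X := fun ω => (X ω, ())) (Y := X)
      (Deq.comp (fun z => z.1) (fun a => (a, ())) (fun _ => rfl) (fun _ => rfl)),
    Hent_congr hμ0 (X := fun ω => ((), Y ω)) (Y := Y)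
      (Deq.comp (fun z => z.2) (fun b => ((), b)) (fun _ => rfl) (fun _ => rfl)),
    Hent_congr hμ0 (X := fun ω => (X ω, (), Y ω)) (Y := fun ω => (X ω, Y ω))
      (Deq.comp (fun z => (z.1, z.2.2)) (fun z => (z.1, (), z.2)) (fun _ => rfl) (fun _ => rfl)),
    Hent_const hμ1 ()] at h
  linarith

lemma condMI_le_Hent (hμ0 : ∀ ω, 0 ≤ μ ω) (hμ1 : ∑ ω, μ ω = 1)
    (A : Ω → α) (B : Ω → β) (C : Ω → γ) : condMI μ A B C ≤ Hent μ A := by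
  rw [condMI]
  have h1 : Hent μ (fun ω => (A ω, B ω)) ≤ Hent μ A + Hent μ B :=
    Hent_pair_le_add hμ0 hμ1 A B
  have h2 : Hent μ (fun ω => (B ω, C ω)) ≤ Hent μ (fun ω => (A ω, B ω, C ω)) := by
    rw [Hent_congr hμ0 (X := fun ω => (A ω, B ω, C ω)) (Y := fun ω => ((B ω, C ω), A ω))
      (Deq.comp (fun z => (z.2, z.1)) (fun z => (z.2, z.1)) (fun _ => rfl) (fun _ => rfl))]
    exact Hent_le_Hent_pair hμ0 _ A
  linarith

lemma condMI_data_proc (hμ0 : ∀ ω, 0 ≤ μ ω) (hμ1 : ∑ ω, μ ω = 1)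
    (A : Ω → α) (B : Ω → β) (C : Ω → γ) (f : α → δ) :
    condMI μ (fun ω => f (A ω)) B C ≤ condMI μ A B C := by
  have e1 : condMI μ A B C = condMI μ (fun ω => (f (A ω), A ω)) B C :=
    condMI_congr hμ0
      (Deq.comp (fun a => (f a, a)) (fun z => z.2) (fun _ => rfl) (fun _ => rfl))
      (Deq.refl B) (Deq.refl C)
  rw [e1, condMI_chain hμ0 (fun ω => f (A ω)) A B C]
  have := condMI_nonneg hμ0 hμ1 A (fun ω => (B ω, f (A ω))) C
  linarith

lemma condMI_const_right (hμ0 : ∀ ω, 0 ≤ μ ω) (hμ1 : ∑ ω, μ ω = 1)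
    (A : Ω → α) (B : Ω → β) (c : γ) : condMI μ A B (fun _ => c) = 0 := by
  rw [condMI]
  rw [Hent_congr hμ0 (X := fun ω => (B ω, c)) (Y := B)
      (Deq.comp (fun z => z.1) (fun b => (b, c)) (fun _ => rfl) (fun _ => rfl)),
    Hent_congr hμ0 (X := fun ω => (A ω, B ω, c)) (Y := fun ω => (A ω, B ω))
      (Deq.comp (fun z => (z.1, z.2.1)) (fun z => (z.1, z.2, c)) (fun _ => rfl) (fun _ => rfl))]
  ring

end API5
section API6
variable {Ω α β γ δ ε : Type*} [Fintype Ω]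
variable [Fintype α] [DecidableEq α] [Fintype β] [DecidableEq β]
  [Fintype γ] [DecidableEq γ] [Fintype δ] [DecidableEq δ] [Fintype ε] [DecidableEq ε]
variable {μ : Ω → ℝ}

lemma ent_prod {u : α → ℝ} {v : β → ℝ} (hu : ∑ a, u a = 1) (hv : ∑ b, v b = 1) :
    ent (fun z : α × β => u z.1 * v z.2) = ent u + ent v := by
  rw [ent, ent, ent, Fintype.sum_prod_type]
  have key : ∀ a b, u a * v b * Real.log (u a * v b)
      = u a * v b * Real.log (u a) + u a * v b * Real.log (v b) := by
    intro a b
    by_cases h : u a * v b = 0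
    · rcases mul_eq_zero.mp h with h' | h' <;> rw [h'] <;> ring_nf <;> simp
    · rw [Real.log_mul (fun h' => h (by rw [h']; ring)) (fun h' => h (by rw [h']; ring))]
      ring
  have : ∑ a, ∑ b, u a * v b * Real.log (u a * v b)
      = (∑ a, u a * Real.log (u a)) * (∑ b, v b) + (∑ a, u a) * (∑ b, v b * Real.log (v b)) := by
    rw [Finset.sum_mul_sum, Finset.sum_mul_sum, ← Finset.sum_add_distrib]
    refine Finset.sum_congr rfl fun a _ => ?_
    rw [← Finset.sum_add_distrib]
    refine Finset.sum_congr rfl fun b _ => ?_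
    rw [key a b]; ring
  rw [this, hu, hv]; ring

lemma pushf_prod_map {u : α → ℝ} {v : β → ℝ} {U : Ω → α} {V : Ω → β}
    (hprod : pushf μ (fun ω => (U ω, V ω)) = fun z => u z.1 * v z.2)
    (f : α → γ) (g : β → δ) :
    pushf μ (fun ω => (f (U ω), g (V ω)))
      = fun w => pushf u f w.1 * pushf v g w.2 := by
  have h1 : pushf μ (fun ω => (f (U ω), g (V ω)))
      = pushf (pushf μ (fun ω => (U ω, V ω))) (fun z => (f z.1, g z.2)) :=
    pushf_comp μ (fun ω => (U ω, V ω)) (fun z => (f z.1, g z.2))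
  rw [h1, hprod]
  funext w
  rw [pushf]
  have hfilter : Finset.univ.filter (fun z : α × β => (f z.1, g z.2) = w)
      = (Finset.univ.filter (fun a => f a = w.1)) ×ˢ (Finset.univ.filter (fun b => g b = w.2)) := by
    ext z
    simp [Prod.ext_iff]
  rw [hfilter, Finset.sum_product]
  rw [pushf, pushf, Finset.sum_mul_sum]

lemma Hent_marg_fst {u : α → ℝ} {v : β → ℝ} {U : Ω → α} {V : Ω → β}
    (hv : ∑ b, v b = 1)
    (hprod : pushf μ (fun ω => (U ω, V ω)) = fun z => u z.1 * v z.2)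
    (f : α → γ) (g : β → δ) :
    pushf μ (fun ω => f (U ω)) = pushf u f := by
  funext a
  rw [marg_fst μ (fun ω => f (U ω)) (fun ω => g (V ω)) a]
  have := pushf_prod_map hprod f g
  calc ∑ b, pushf μ (fun ω => (f (U ω), g (V ω))) (a, b)
      = ∑ b, pushf u f a * pushf v g b := by rw [this]
    _ = pushf u f a * ∑ b, pushf v g b := by rw [Finset.mul_sum]
    _ = pushf u f a := by rw [sum_pushf, hv, mul_one]

lemma Hent_marg_snd {u : α → ℝ} {v : β → ℝ} {U : Ω → α} {V : Ω → β}
    (hu : ∑ a, u a = 1)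
    (hprod : pushf μ (fun ω => (U ω, V ω)) = fun z => u z.1 * v z.2)
    (f : α → γ) (g : β → δ) :
    pushf μ (fun ω => g (V ω)) = pushf v g := by
  funext b
  rw [marg_snd μ (fun ω => f (U ω)) (fun ω => g (V ω)) b]
  have := pushf_prod_map hprod f g
  calc ∑ a, pushf μ (fun ω => (f (U ω), g (V ω))) (a, b)
      = ∑ a, pushf u f a * pushf v g b := by rw [this]
    _ = (∑ a, pushf u f a) * pushf v g b := by rw [Finset.sum_mul]
    _ = pushf v g b := by rw [sum_pushf, hu, one_mul]

lemma Hent_add_of_indep {u : α → ℝ} {v : β → ℝ} {U : Ω → α} {V : Ω → β}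
    (hu : ∑ a, u a = 1) (hv : ∑ b, v b = 1)
    (hprod : pushf μ (fun ω => (U ω, V ω)) = fun z => u z.1 * v z.2)
    (f : α → γ) (g : β → δ) :
    Hent μ (fun ω => (f (U ω), g (V ω)))
      = Hent μ (fun ω => f (U ω)) + Hent μ (fun ω => g (V ω)) := by
  rw [Hent, Hent, Hent, pushf_prod_map hprod f g,
    Hent_marg_fst hv hprod f g, Hent_marg_snd hu hprod f g]
  exact ent_prod (by rw [sum_pushf, hu]) (by rw [sum_pushf, hv])

/-- If `(U,V)` are independent then `I(f(U) ; h(V) | g(V)) = 0`. -/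
lemma condMI_zero_of_indep {u : α → ℝ} {v : β → ℝ} {U : Ω → α} {V : Ω → β}
    (hu : ∑ a, u a = 1) (hv : ∑ b, v b = 1)
    (hprod : pushf μ (fun ω => (U ω, V ω)) = fun z => u z.1 * v z.2)
    (f : α → γ) (g : β → δ) (h : β → ε) :
    condMI μ (fun ω => f (U ω)) (fun ω => g (V ω)) (fun ω => h (V ω)) = 0 := by
  rw [condMI]
  have e1 : Hent μ (fun ω => (f (U ω), g (V ω)))
      = Hent μ (fun ω => f (U ω)) + Hent μ (fun ω => g (V ω)) :=
    Hent_add_of_indep hu hv hprod f g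
  have e2 : Hent μ (fun ω => (f (U ω), g (V ω), h (V ω)))
      = Hent μ (fun ω => f (U ω)) + Hent μ (fun ω => (g (V ω), h (V ω))) :=
    Hent_add_of_indep hu hv hprod f (fun b => (g b, h b))
  rw [e1, e2]
  ring

end API6
section API7
variable {Ω α : Type*} [Fintype Ω] [Fintype α] [DecidableEq α]
variable {μ : Ω → ℝ} {n : ℕ}

lemma pushf_mix_eq (W : (Fin n × Ω) → α) (a : α) :
    pushf (fun z : Fin n × Ω => μ z.2 / n) W a
      = ∑ q, pushf μ (fun ω => W (q, ω)) a / n := by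
  rw [pushf, Finset.sum_filter, Fintype.sum_prod_type]
  refine Finset.sum_congr rfl fun q _ => ?_
  rw [pushf, Finset.sum_filter, Finset.sum_div]
  exact Finset.sum_congr rfl fun ω _ => by by_cases h : W (q, ω) = a <;> simp [h]

/-- If the conditional law of `W` given `Q = q` is the same `ρ` for all `q`,
then the law of `W` under the mixture is `ρ`. -/
lemma pushf_mix_const (hn : 0 < n) {W : (Fin n × Ω) → α} {ρ : α → ℝ}
    (h : ∀ q, pushf μ (fun ω => W (q, ω)) = ρ) :
    pushf (fun z : Fin n × Ω => μ z.2 / n) W = ρ := by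
  funext a
  rw [pushf_mix_eq W a]
  have : ∀ q : Fin n, pushf μ (fun ω => W (q, ω)) a / n = ρ a / n := fun q => by rw [h q]
  rw [Finset.sum_congr rfl fun q _ => this q, Finset.sum_const, Finset.card_univ,
    Fintype.card_fin, nsmul_eq_mul]
  field_simp

lemma Hent_mix (hn : 0 < n) (hμ1 : ∑ ω, μ ω = 1)
    (W : (Fin n × Ω) → α) (π : α → Fin n) (hπ : ∀ z, π (W z) = z.1) :
    Hent (fun z : Fin n × Ω => μ z.2 / n) W
      = Real.log n + (∑ q, Hent μ (fun ω => W (q, ω))) / n := by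
  have hnR : (n : ℝ) ≠ 0 := Nat.cast_ne_zero.mpr hn.ne'
  set p : Fin n → α → ℝ := fun q => pushf μ (fun ω => W (q, ω)) with hp
  have hzero : ∀ q a, π a ≠ q → p q a = 0 := by
    intro q a hne
    show pushf μ (fun ω => W (q, ω)) a = 0
    rw [pushf, Finset.filter_false_of_mem, Finset.sum_empty]
    intro ω _ h
    exact hne (by rw [← h, hπ (q, ω)])
  have hkey : ∀ a, pushf (fun z : Fin n × Ω => μ z.2 / n) W a = p (π a) a / n := by
    intro a
    rw [pushf_mix_eq W a]
    rw [Finset.sum_eq_single (π a)]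
    · intro q _ hne
      rw [show pushf μ (fun ω => W (q, ω)) = p q from rfl, hzero q a (Ne.symm hne), zero_div]
    · intro h; exact absurd (Finset.mem_univ _) h
  have hsum1 : ∀ q, ∑ a, p q a = 1 := fun q => by rw [hp, sum_pushf, hμ1]
  rw [Hent, ent]
  have hterm : ∀ a, pushf (fun z : Fin n × Ω => μ z.2 / n) W a
        * Real.log (pushf (fun z : Fin n × Ω => μ z.2 / n) W a)
      = (p (π a) a * Real.log (p (π a) a)) / n - (p (π a) a * Real.log n) / n := by
    intro a
    rw [hkey a]
    by_cases h : p (π a) a = 0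
    · rw [h]; simp
    · rw [Real.log_div h hnR]
      field_simp
  rw [Finset.sum_congr rfl fun a _ => hterm a, Finset.sum_sub_distrib]
  have hgroup : ∀ f : Fin n → α → ℝ, (∀ q a, π a ≠ q → f q a = 0) →
      ∑ a, f (π a) a = ∑ q, ∑ a, f q a := by
    intro f hf
    rw [← Finset.sum_fiberwise (Finset.univ : Finset α) π (fun a => f (π a) a)]
    refine Finset.sum_congr rfl fun q _ => ?_
    rw [Finset.sum_filter]
    refine Finset.sum_congr rfl fun a _ => ?_
    by_cases h : π a = q
    · rw [if_pos h, h]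
    · rw [if_neg h, hf q a h]
  have e1 : ∑ a, (p (π a) a * Real.log (p (π a) a)) / n
      = (∑ q, ∑ a, p q a * Real.log (p q a)) / n := by
    rw [← Finset.sum_div]
    congr 1
    exact hgroup (fun q a => p q a * Real.log (p q a)) (fun q a h => by show p q a * _ = 0; rw [hzero q a h]; ring)
  have e2 : ∑ a, (p (π a) a * Real.log n) / n = Real.log n := by
    rw [← Finset.sum_div]
    have : ∑ a, p (π a) a * Real.log n = (∑ q, ∑ a, p q a) * Real.log n := by
      rw [Finset.sum_mul]
      rw [hgroup (fun q a => p q a * Real.log n) (fun q a h => by show p q a * _ = 0; rw [hzero q a h]; ring)]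
      exact Finset.sum_congr rfl fun q _ => by rw [Finset.sum_mul]
    rw [this]
    rw [Finset.sum_congr rfl fun q _ => hsum1 q, Finset.sum_const, Finset.card_univ,
      Fintype.card_fin, nsmul_eq_mul, mul_one]
    field_simp
  rw [e1, e2]
  have : ∑ q, Hent μ (fun ω => W (q, ω)) = -∑ q, ∑ a, p q a * Real.log (p q a) := by
    rw [← Finset.sum_neg_distrib]
    rfl
  rw [this]
  ring

end API7
section API8

lemma pushf_id {α : Type*} [Fintype α] [DecidableEq α] (v : α → ℝ) :
    pushf v (fun x => x) = v := by
  funext a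
  rw [pushf, Finset.sum_filter]
  simp

lemma sum_pi_one {ι 𝒳 : Type*} [Fintype ι] [DecidableEq ι] [Fintype 𝒳] {p' : 𝒳 → ℝ}
    (h : ∑ x, p' x = 1) : ∑ z : ι → 𝒳, ∏ j, p' (z j) = 1 := by
  rw [← Fintype.piFinset_univ, ← Finset.prod_univ_sum]
  simp [h]

lemma split_indep {n : ℕ} {𝒳 : Type*} [Fintype 𝒳] [DecidableEq 𝒳] (p' : 𝒳 → ℝ) (q : Fin n) :
    pushf (fun z : Fin n → 𝒳 => ∏ j, p' (z j))
        (fun z => ((fun j : {j : Fin n // j ≠ q} => z j.1), z q))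
      = fun w => (∏ j : {j : Fin n // j ≠ q}, p' (w.1 j)) * p' w.2 := by
  funext w
  rw [pushf]
  have hfil : Finset.univ.filter
      (fun z : Fin n → 𝒳 => ((fun j : {j : Fin n // j ≠ q} => z j.1), z q) = w)
      = {fun j => if h : j = q then w.2 else w.1 ⟨j, h⟩} := by
    ext z
    simp only [Finset.mem_filter, Finset.mem_univ, true_and, Finset.mem_singleton, Prod.ext_iff]
    constructor
    · rintro ⟨h1, h2⟩
      funext j
      by_cases hj : j = q
      · rw [dif_pos hj, ← h2, hj]
      · rw [dif_neg hj, ← h1]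
    · rintro rfl
      constructor
      · funext j
        exact dif_neg j.2
      · exact dif_pos rfl
  rw [hfil, Finset.sum_singleton]
  rw [← Finset.mul_prod_erase Finset.univ _ (Finset.mem_univ q)]
  rw [show (fun j => if h : j = q then w.2 else w.1 ⟨j, h⟩) q = w.2 from dif_pos rfl]
  rw [mul_comm]
  congr 1
  rw [Finset.prod_subtype (Finset.univ.erase q)
    (p := fun j => j ≠ q) (fun x => by simp [Finset.mem_erase])]
  exact Finset.prod_congr rfl fun j _ => congrArg p' (dif_neg j.2)

variable {Ω 𝒜 𝒳₁ 𝒳₂ : Type*} {n : ℕ}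
  [Fintype Ω] [Fintype 𝒜] [Fintype 𝒳₁] [Fintype 𝒳₂]
  [DecidableEq 𝒜] [DecidableEq 𝒳₁] [DecidableEq 𝒳₂]
  {μ : Ω → ℝ} {G : Ω → 𝒜} {X1 : Ω → Fin n → 𝒳₁} {X2 : Ω → Fin n → 𝒳₂}
  {p : 𝒳₁ × 𝒳₂ → ℝ}

lemma pushf_Y (hμ : IsPMF μ)
    (hiid : pushf μ (fun ω => (G ω, fun q => (X1 ω q, X2 ω q)))
      = fun z => pushf μ G z.1 * ∏ q, p (z.2 q)) :
    pushf μ (fun ω => (fun q => (X1 ω q, X2 ω q)))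
      = fun z : Fin n → 𝒳₁ × 𝒳₂ => ∏ q, p (z q) := by
  have hG1 : ∑ a, pushf μ G a = 1 := by rw [sum_pushf, hμ.2]
  have := Hent_marg_snd (μ := μ) (U := G) (V := fun ω => fun q => (X1 ω q, X2 ω q))
    (u := pushf μ G) (v := fun z : Fin n → 𝒳₁ × 𝒳₂ => ∏ q, p (z q))
    hG1 hiid (fun a => a) (fun z => z)
  rw [pushf_id] at this
  exact this

lemma pushf_pair_split (hμ : IsPMF μ)
    (hiid : pushf μ (fun ω => (G ω, fun q => (X1 ω q, X2 ω q)))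
      = fun z => pushf μ G z.1 * ∏ q, p (z.2 q)) (q : Fin n) :
    pushf μ (fun ω => ((fun j : {j : Fin n // j ≠ q} => (X1 ω j.1, X2 ω j.1)),
        (X1 ω q, X2 ω q)))
      = fun w => (∏ j : {j : Fin n // j ≠ q}, p (w.1 j)) * p w.2 := by
  have h1 : pushf μ (fun ω => ((fun j : {j : Fin n // j ≠ q} => (X1 ω j.1, X2 ω j.1)),
        (X1 ω q, X2 ω q)))
      = pushf (pushf μ (fun ω => (fun q => (X1 ω q, X2 ω q))))
          (fun z => ((fun j : {j : Fin n // j ≠ q} => z j.1), z q)) :=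
    pushf_comp μ (fun ω => (fun q => (X1 ω q, X2 ω q)))
      (fun z => ((fun j : {j : Fin n // j ≠ q} => z j.1), z q))
  rw [h1, pushf_Y hμ hiid, split_indep p q]

lemma pushf_atq (hμ : IsPMF μ) (hp : IsPMF p)
    (hiid : pushf μ (fun ω => (G ω, fun q => (X1 ω q, X2 ω q)))
      = fun z => pushf μ G z.1 * ∏ q, p (z.2 q)) (q : Fin n)
    {τ : Type*} [Fintype τ] [DecidableEq τ] (h : 𝒳₁ × 𝒳₂ → τ) :
    pushf μ (fun ω => h (X1 ω q, X2 ω q)) = pushf p h := by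
  have hu : ∑ w : {j : Fin n // j ≠ q} → 𝒳₁ × 𝒳₂, ∏ j, p (w j) = 1 := sum_pi_one hp.2
  exact Hent_marg_snd (μ := μ)
    (U := fun ω => (fun j : {j : Fin n // j ≠ q} => (X1 ω j.1, X2 ω j.1)))
    (V := fun ω => (X1 ω q, X2 ω q))
    (u := fun w : {j : Fin n // j ≠ q} → 𝒳₁ × 𝒳₂ => ∏ j, p (w j)) (v := p)
    hu (pushf_pair_split hμ hiid q) (fun a => a) h

end API8
section Part1
variable {Ω : Type*} [Fintype Ω] {α : Type*} [Fintype α] [DecidableEq α] {μ : Ω → ℝ}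

lemma Hent_nonneg (hμ0 : ∀ ω, 0 ≤ μ ω) (hμ1 : ∑ ω, μ ω = 1) (X : Ω → α) :
    0 ≤ Hent μ X := by
  rw [Hent, ent, neg_nonneg]
  refine Finset.sum_nonpos fun a _ => ?_
  have h0 := pushf_nonneg hμ0 X a
  have h1 : pushf μ X a ≤ 1 := by
    rw [← hμ1, ← sum_pushf μ X]
    exact Finset.single_le_sum (fun a' _ => pushf_nonneg hμ0 X a') (Finset.mem_univ a)
  exact mul_nonpos_of_nonneg_of_nonpos h0 (Real.log_nonpos h0 h1)

end Part1


section Part1main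
variable {Ω 𝒜 𝒞 𝒳₁ 𝒳₂ : Type*} {n r : ℕ}
    [Fintype Ω] [Fintype 𝒜] [Fintype 𝒞] [Fintype 𝒳₁] [Fintype 𝒳₂]
    [DecidableEq 𝒜] [DecidableEq 𝒞] [DecidableEq 𝒳₁] [DecidableEq 𝒳₂]

lemma part1 (μ : Ω → ℝ) (hμ : IsPMF μ)
    (G : Ω → 𝒜) (C : Fin r → Ω → 𝒞)
    (X1 : Ω → Fin n → 𝒳₁) (X2 : Ω → Fin n → 𝒳₂)
    (p : 𝒳₁ × 𝒳₂ → ℝ) (hp : IsPMF p)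
    (hiid : pushf μ (fun ω => (G ω, fun q => (X1 ω q, X2 ω q)))
      = fun z => pushf μ G z.1 * ∏ q, p (z.2 q))
    (heven : ∀ i : Fin r, Odd i.val →
      condMI μ (C i)
        (fun ω => (G ω, (fun j : Fin i.val => C (Fin.castLE i.isLt.le j) ω), X2 ω))
        X1 = 0) :
    ∑ i ∈ Finset.univ.filter (fun i : Fin r => Even i.val), Hent μ (C i)
        ≥ condMI μ (fun ω => (G ω, fun i : Fin r => C i ω)) X2 X1 := by
  have hμ0 := hμ.1
  have hμ1 := hμ.2
  -- the base case: I(G ; X1 | X2) = 0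
  have hbase : condMI μ G X2 X1 = 0 := by
    have hG1 : ∑ a, pushf μ G a = 1 := by rw [sum_pushf, hμ1]
    have hP1 : ∑ z : Fin n → 𝒳₁ × 𝒳₂, ∏ q, p (z q) = 1 := sum_pi_one hp.2
    exact condMI_zero_of_indep (U := G) (V := fun ω => fun q => (X1 ω q, X2 ω q))
      hG1 hP1 hiid (fun a => a) (fun z => fun q => (z q).2) (fun z => fun q => (z q).1)
  -- main induction
  have main : ∀ k, ∀ hk : k ≤ r,
      condMI μ (fun ω => (G ω, fun j : Fin k => C (Fin.castLE hk j) ω)) X2 X1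
        ≤ ∑ i : Fin r, if Even i.val ∧ i.val < k then Hent μ (C i) else 0 := by
    intro k
    induction k with
    | zero =>
      intro hk
      have h0 : condMI μ (fun ω => (G ω, fun j : Fin 0 => C (Fin.castLE hk j) ω)) X2 X1
          = condMI μ G X2 X1 :=
        condMI_congr hμ0
          (Deq.comp (fun z => z.1) (fun a => (a, fun j : Fin 0 => j.elim0))
            (fun ω => rfl) (fun ω => by
              refine Prod.ext rfl ?_
              funext j
              exact j.elim0))
          (Deq.refl X2) (Deq.refl X1)
      rw [h0, hbase]
      exact Finset.sum_nonneg fun i _ => by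
        by_cases h : Even i.val ∧ i.val < 0
        · rw [if_pos h]; exact Hent_nonneg hμ0 hμ1 (C i)
        · rw [if_neg h]
    | succ k ih =>
      intro hk1
      have hkr : k < r := hk1
      have hk : k ≤ r := hkr.le
      have hdeq : Deq (fun ω => (G ω, fun j : Fin (k+1) => C (Fin.castLE hk1 j) ω))
          (fun ω => ((G ω, fun j : Fin k => C (Fin.castLE hk j) ω), C ⟨k, hkr⟩ ω)) :=
        Deq.comp
          (fun z : 𝒜 × (Fin (k+1) → 𝒞) =>
            ((z.1, fun j : Fin k => z.2 j.castSucc), z.2 (Fin.last k)))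
          (fun w : (𝒜 × (Fin k → 𝒞)) × 𝒞 =>
            (w.1.1, fun j : Fin (k+1) => if h : j.val < k then w.1.2 ⟨j.val, h⟩ else w.2))
          (fun ω => rfl)
          (fun ω => by
            refine Prod.ext rfl ?_
            funext j
            show C (Fin.castLE hk1 j) ω =
              if h : (j : ℕ) < k then C (Fin.castLE hk ⟨(j : ℕ), h⟩) ω else C ⟨k, hkr⟩ ω
            by_cases h : (j : ℕ) < k
            · have he : Fin.castLE hk1 j = Fin.castLE hk ⟨(j : ℕ), h⟩ := Fin.ext rfl
              rw [he, dif_pos h]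
            · have hv : (j : ℕ) = k := by omega
              have he : Fin.castLE hk1 j = ⟨k, hkr⟩ := Fin.ext hv
              rw [he, dif_neg h])
      rw [condMI_congr hμ0 hdeq (Deq.refl X2) (Deq.refl X1),
        condMI_chain hμ0 (fun ω => (G ω, fun j : Fin k => C (Fin.castLE hk j) ω))
          (C ⟨k, hkr⟩) X2 X1]
      -- the sum identity
      have hsum : ∑ i : Fin r, (if Even i.val ∧ i.val < k+1 then Hent μ (C i) else 0)
          = (∑ i : Fin r, if Even i.val ∧ i.val < k then Hent μ (C i) else 0)
            + (if Even k then Hent μ (C ⟨k, hkr⟩) else 0) := by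
        have hrepr : (if Even k then Hent μ (C ⟨k, hkr⟩) else 0)
            = ∑ i : Fin r, if i = ⟨k, hkr⟩ ∧ Even i.val then Hent μ (C i) else 0 := by
          by_cases he : Even k
          · rw [if_pos he, Finset.sum_eq_single_of_mem (⟨k, hkr⟩ : Fin r) (Finset.mem_univ _)]
            · rw [if_pos ⟨rfl, he⟩]
            · intro i _ hne
              rw [if_neg (fun h => hne h.1)]
          · rw [if_neg he]
            refine (Finset.sum_eq_zero fun i _ => ?_).symm
            refine if_neg fun h => he ?_
            have : i.val = k := by rw [h.1]
            rw [← this]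
            exact h.2
        rw [hrepr, ← Finset.sum_add_distrib]
        refine Finset.sum_congr rfl fun i _ => ?_
        by_cases hE : Even i.val
        · by_cases hvk : i.val < k
          · have h3 : ¬(i = ⟨k, hkr⟩) := fun h => by
              rw [h] at hvk
              exact absurd hvk (lt_irrefl k)
            rw [if_pos ⟨hE, Nat.lt_succ_of_lt hvk⟩, if_pos ⟨hE, hvk⟩, if_neg fun h => h3 h.1,
              add_zero]
          · by_cases hv : i.val = k
            · have h3 : i = ⟨k, hkr⟩ := Fin.ext hv
              rw [if_pos ⟨hE, by omega⟩, if_neg fun h => hvk h.2, if_pos ⟨h3, hE⟩, zero_add]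
            · have hnlt : ¬(i.val < k + 1) := by omega
              rw [if_neg fun h => hnlt h.2, if_neg fun h => hvk h.2,
                if_neg fun h => hv (by rw [h.1]), add_zero]
        · rw [if_neg fun h => hE h.1, if_neg fun h => hE h.1,
            if_neg fun h => hE (by rw [h.1] at hE ⊢; exact (by rw [← h.1]; exact h.2)), add_zero]
      rw [hsum]
      have hterm : condMI μ (C ⟨k, hkr⟩)
          (fun ω => (X2 ω, (G ω, fun j : Fin k => C (Fin.castLE hk j) ω))) X1
          ≤ if Even k then Hent μ (C ⟨k, hkr⟩) else 0 := by
        by_cases he : Even k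
        · rw [if_pos he]
          exact condMI_le_Hent hμ0 hμ1 _ _ _
        · rw [if_neg he]
          have ho : Odd k := Nat.odd_iff.mpr (Nat.not_even_iff.mp he)
          have hzero := heven ⟨k, hkr⟩ ho
          have hcongr : condMI μ (C ⟨k, hkr⟩)
              (fun ω => (X2 ω, (G ω, fun j : Fin k => C (Fin.castLE hk j) ω))) X1
              = condMI μ (C ⟨k, hkr⟩)
                (fun ω => (G ω, (fun j : Fin (k:ℕ) => C (Fin.castLE hk j) ω), X2 ω)) X1 :=
            condMI_congr hμ0 (Deq.refl _)
              (Deq.comp (fun z => (z.2.1, z.2.2, z.1)) (fun z => (z.2.2, (z.1, z.2.1)))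
                (fun ω => rfl) (fun ω => rfl))
              (Deq.refl _)
          rw [hcongr]
          exact le_of_eq hzero
      have := ih hk
      linarith
  have hfin := main r le_rfl
  have hleft : condMI μ (fun ω => (G ω, fun j : Fin r => C (Fin.castLE le_rfl j) ω)) X2 X1
      = condMI μ (fun ω => (G ω, fun i : Fin r => C i ω)) X2 X1 := rfl
  have hright : ∑ i : Fin r, (if Even i.val ∧ i.val < r then Hent μ (C i) else 0)
      = ∑ i ∈ Finset.univ.filter (fun i : Fin r => Even i.val), Hent μ (C i) := by
    rw [Finset.sum_filter]
    refine Finset.sum_congr rfl fun i _ => ?_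
    by_cases h : Even i.val
    · rw [if_pos ⟨h, i.isLt⟩, if_pos h]
    · rw [if_neg fun hh => h hh.1, if_neg h]
  rw [hleft, hright] at hfin
  exact hfin

end Part1main
section Part2main
variable {Ω 𝒜 𝒞 𝒳₁ 𝒳₂ : Type*} {n r : ℕ}
    [Fintype Ω] [Fintype 𝒜] [Fintype 𝒞] [Fintype 𝒳₁] [Fintype 𝒳₂]
    [DecidableEq 𝒜] [DecidableEq 𝒞] [DecidableEq 𝒳₁] [DecidableEq 𝒳₂]

lemma part2 (μ : Ω → ℝ) (hμ : IsPMF μ)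
    (G : Ω → 𝒜) (C : Fin r → Ω → 𝒞)
    (X1 : Ω → Fin n → 𝒳₁) (X2 : Ω → Fin n → 𝒳₂)
    (p : 𝒳₁ × 𝒳₂ → ℝ) (hp : IsPMF p)
    (hiid : pushf μ (fun ω => (G ω, fun q => (X1 ω q, X2 ω q)))
      = fun z => pushf μ G z.1 * ∏ q, p (z.2 q)) :
    condMI μ (fun ω => (G ω, fun i : Fin r => C i ω)) X2 X1
        = ∑ q : Fin n,
            condMI μ
              (fun ω => ((G ω, (fun i : Fin r => C i ω)),
                ((fun j : {j : Fin n // q < j} => X1 ω j.1),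
                 (fun j : {j : Fin n // j ≠ q} => X2 ω j.1))))
              (fun ω => X2 ω q) (fun ω => X1 ω q) := by
  have hμ0 := hμ.1
  have hμ1 := hμ.2
  -- per-coordinate identity
  have perq : ∀ q : Fin n,
      condMI μ
        (fun ω => ((G ω, (fun i : Fin r => C i ω)),
          ((fun j : {j : Fin n // q < j} => X1 ω j.1),
           (fun j : {j : Fin n // j ≠ q} => X2 ω j.1))))
        (fun ω => X2 ω q) (fun ω => X1 ω q)
      = condMI μ (fun ω => (G ω, fun i : Fin r => C i ω))
          (fun ω => (X2 ω, fun j : {j : Fin n // q < j} => X1 ω j.1))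
          (fun ω => X1 ω q) := by
    intro q
    have hzero : condMI μ
        (fun ω => ((fun j : {j : Fin n // q < j} => X1 ω j.1),
           (fun j : {j : Fin n // j ≠ q} => X2 ω j.1)))
        (fun ω => X2 ω q) (fun ω => X1 ω q) = 0 := by
      have hu : ∑ w : {j : Fin n // j ≠ q} → 𝒳₁ × 𝒳₂, ∏ j, p (w j) = 1 := sum_pi_one hp.2
      exact condMI_zero_of_indep
        (U := fun ω => (fun j : {j : Fin n // j ≠ q} => (X1 ω j.1, X2 ω j.1)))
        (V := fun ω => (X1 ω q, X2 ω q))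
        hu hp.2 (pushf_pair_split hμ hiid q)
        (fun w => ((fun j : {j : Fin n // q < j} => (w ⟨j.1, ne_of_gt j.2⟩).1),
                   (fun j : {j : Fin n // j ≠ q} => (w j).2)))
        (fun x => x.2) (fun x => x.1)
    have hswap : condMI μ
        (fun ω => ((G ω, (fun i : Fin r => C i ω)),
          ((fun j : {j : Fin n // q < j} => X1 ω j.1),
           (fun j : {j : Fin n // j ≠ q} => X2 ω j.1))))
        (fun ω => X2 ω q) (fun ω => X1 ω q)
        = condMI μ
        (fun ω => (((fun j : {j : Fin n // q < j} => X1 ω j.1),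
           (fun j : {j : Fin n // j ≠ q} => X2 ω j.1)), (G ω, (fun i : Fin r => C i ω))))
        (fun ω => X2 ω q) (fun ω => X1 ω q) :=
      condMI_congr hμ0
        (Deq.comp (fun z => (z.2, z.1)) (fun z => (z.2, z.1)) (fun _ => rfl) (fun _ => rfl))
        (Deq.refl _) (Deq.refl _)
    rw [hswap, condMI_chain hμ0
      (fun ω => ((fun j : {j : Fin n // q < j} => X1 ω j.1),
        (fun j : {j : Fin n // j ≠ q} => X2 ω j.1)))
      (fun ω => (G ω, (fun i : Fin r => C i ω)))
      (fun ω => X2 ω q) (fun ω => X1 ω q), hzero, zero_add]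
    refine condMI_congr hμ0 (Deq.refl _) ?_ (Deq.refl _)
    refine Deq.comp
      (fun z : 𝒳₂ × (({j : Fin n // q < j} → 𝒳₁) × ({j : Fin n // j ≠ q} → 𝒳₂)) =>
        ((fun j : Fin n => if h : j = q then z.1 else z.2.2 ⟨j, h⟩), z.2.1))
      (fun w : (Fin n → 𝒳₂) × ({j : Fin n // q < j} → 𝒳₁) =>
        (w.1 q, (w.2, fun j : {j : Fin n // j ≠ q} => w.1 j.1)))
      (fun ω => ?_) (fun ω => rfl)
    refine Prod.ext ?_ rfl
    funext j
    show X2 ω j = if h : j = q then X2 ω q else X2 ω j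
    by_cases h : j = q
    · rw [dif_pos h, h]
    · rw [dif_neg h]
  -- telescoping
  have tele : ∀ d m : ℕ, m + d = n →
      condMI μ (fun ω => (G ω, fun i : Fin r => C i ω)) X2
          (fun ω => fun j : {j : Fin n // m ≤ (j : ℕ)} => X1 ω j.1)
        = ∑ q ∈ Finset.univ.filter (fun q : Fin n => m ≤ (q : ℕ)),
            condMI μ (fun ω => (G ω, fun i : Fin r => C i ω))
              (fun ω => (X2 ω, fun j : {j : Fin n // q < j} => X1 ω j.1))
              (fun ω => X1 ω q) := by
    intro d
    induction d with
    | zero =>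
      intro m hm
      have hmn : m = n := by omega
      have hL : condMI μ (fun ω => (G ω, fun i : Fin r => C i ω)) X2
          (fun ω => fun j : {j : Fin n // m ≤ (j : ℕ)} => X1 ω j.1)
          = condMI μ (fun ω => (G ω, fun i : Fin r => C i ω)) X2 (fun _ => ()) :=
        condMI_congr hμ0 (Deq.refl _) (Deq.refl _)
          (Deq.comp (fun _ => ())
            (fun _ => fun j : {j : Fin n // m ≤ (j : ℕ)} =>
              absurd j.2 (by have := j.1.isLt; omega))
            (fun ω => rfl)
            (fun ω => funext fun j => absurd j.2 (by have := j.1.isLt; omega)))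
      rw [hL, condMI_const_right hμ0 hμ1]
      rw [Finset.filter_false_of_mem, Finset.sum_empty]
      intro q _
      have := q.isLt
      omega
    | succ d ihd =>
      intro m hm
      have hmn : m < n := by omega
      have hdeq : Deq (fun ω => fun j : {j : Fin n // m ≤ (j : ℕ)} => X1 ω j.1)
          (fun ω => ((fun j : {j : Fin n // m + 1 ≤ (j : ℕ)} => X1 ω j.1), X1 ω ⟨m, hmn⟩)) :=
        Deq.comp
          (fun s : {j : Fin n // m ≤ (j : ℕ)} → 𝒳₁ =>
            ((fun j : {j : Fin n // m + 1 ≤ (j : ℕ)} => s ⟨j.1, by omega⟩),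
              s ⟨⟨m, hmn⟩, le_refl m⟩))
          (fun w => fun j : {j : Fin n // m ≤ (j : ℕ)} =>
            if h : (j.1 : ℕ) = m then w.2 else w.1 ⟨j.1, by omega⟩)
          (fun ω => rfl)
          (fun ω => by
            funext j
            show X1 ω j.1 = if h : (j.1 : ℕ) = m then X1 ω ⟨m, hmn⟩ else X1 ω j.1
            by_cases h : (j.1 : ℕ) = m
            · rw [dif_pos h]
              exact congrArg (X1 ω) (Fin.ext h)
            · rw [dif_neg h])
      rw [condMI_congr hμ0 (Deq.refl _) (Deq.refl _) hdeq,
        condMI_chainC hμ0 (fun ω => (G ω, fun i : Fin r => C i ω)) X2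
          (fun ω => (fun j : {j : Fin n // m + 1 ≤ (j : ℕ)} => X1 ω j.1))
          (fun ω => X1 ω ⟨m, hmn⟩),
        ihd (m + 1) (by omega)]
      have hins : Finset.univ.filter (fun q : Fin n => m ≤ (q : ℕ))
          = insert (⟨m, hmn⟩ : Fin n)
              (Finset.univ.filter (fun q : Fin n => m + 1 ≤ (q : ℕ))) := by
        ext x
        simp only [Finset.mem_filter, Finset.mem_univ, true_and, Finset.mem_insert, Fin.ext_iff]
        omega
      rw [hins, Finset.sum_insert (by
        simp only [Finset.mem_filter, Finset.mem_univ, true_and]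
        omega)]
      rw [add_comm]
      congr 1
  have h0 := tele n 0 (by omega)
  have hL : condMI μ (fun ω => (G ω, fun i : Fin r => C i ω)) X2
      (fun ω => fun j : {j : Fin n // 0 ≤ (j : ℕ)} => X1 ω j.1)
      = condMI μ (fun ω => (G ω, fun i : Fin r => C i ω)) X2 X1 :=
    condMI_congr hμ0 (Deq.refl _) (Deq.refl _)
      (Deq.comp (fun s => fun j : Fin n => s ⟨j, Nat.zero_le _⟩)
        (fun x => fun j : {j : Fin n // 0 ≤ (j : ℕ)} => x j.1)
        (fun ω => rfl) (fun ω => rfl))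
  rw [hL] at h0
  rw [Finset.filter_true_of_mem (fun q _ => Nat.zero_le _)] at h0
  rw [h0]
  exact (Finset.sum_congr rfl fun q _ => perq q).symm

end Part2main
section Part3mix
variable {Ω α β γ : Type*} [Fintype Ω]
  [Fintype α] [DecidableEq α] [Fintype β] [DecidableEq β] [Fintype γ] [DecidableEq γ]
  {μ : Ω → ℝ} {n : ℕ}

lemma condMI_mix (hn : 0 < n) (hμ1 : ∑ ω, μ ω = 1)
    (A : Fin n × Ω → α) (B : Fin n × Ω → β) (C : Fin n × Ω → γ)
    (π : α → Fin n) (hπ : ∀ z, π (A z) = z.1)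
    (ρB : β → ℝ) (hρB : ∀ q, pushf μ (fun ω => B (q, ω)) = ρB)
    (ρBC : β × γ → ℝ) (hρBC : ∀ q, pushf μ (fun ω => (B (q, ω), C (q, ω))) = ρBC) :
    (n : ℝ) * condMI (fun z : Fin n × Ω => μ z.2 / n) A B C
      = ∑ q, condMI μ (fun ω => A (q, ω)) (fun ω => B (q, ω)) (fun ω => C (q, ω)) := by
  have hnR : (n : ℝ) ≠ 0 := Nat.cast_ne_zero.mpr hn.ne'
  have hAB := Hent_mix hn hμ1 (fun z => (A z, B z)) (fun w => π w.1) (fun z => hπ z)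
  have hABC := Hent_mix hn hμ1 (fun z => (A z, B z, C z)) (fun w => π w.1) (fun z => hπ z)
  have hBm : Hent (fun z : Fin n × Ω => μ z.2 / n) B = ent ρB := by
    rw [Hent, pushf_mix_const hn hρB]
  have hBCm : Hent (fun z : Fin n × Ω => μ z.2 / n) (fun z => (B z, C z)) = ent ρBC := by
    rw [Hent, pushf_mix_const hn (W := fun z => (B z, C z)) (fun q => hρBC q)]
  have hqB : ∀ q, Hent μ (fun ω => B (q, ω)) = ent ρB := fun q => by rw [Hent, hρB q]
  have hqBC : ∀ q, Hent μ (fun ω => (B (q, ω), C (q, ω))) = ent ρBC := fun q => by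
    rw [Hent, hρBC q]
  have hRHS : ∑ q, condMI μ (fun ω => A (q, ω)) (fun ω => B (q, ω)) (fun ω => C (q, ω))
      = (∑ q, Hent μ (fun ω => (A (q, ω), B (q, ω)))) + n * ent ρBC
        - (∑ q, Hent μ (fun ω => (A (q, ω), B (q, ω), C (q, ω)))) - n * ent ρB := by
    have : ∀ q : Fin n, condMI μ (fun ω => A (q, ω)) (fun ω => B (q, ω)) (fun ω => C (q, ω))
        = Hent μ (fun ω => (A (q, ω), B (q, ω))) + ent ρBC
          - Hent μ (fun ω => (A (q, ω), B (q, ω), C (q, ω))) - ent ρB := by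
      intro q
      rw [condMI]
      show Hent μ (fun ω => (A (q, ω), B (q, ω))) + Hent μ (fun ω => (B (q, ω), C (q, ω)))
        - Hent μ (fun ω => (A (q, ω), B (q, ω), C (q, ω))) - Hent μ (fun ω => B (q, ω)) = _
      rw [hqB q, hqBC q]
    rw [Finset.sum_congr rfl fun q _ => this q]
    rw [Finset.sum_sub_distrib, Finset.sum_sub_distrib, Finset.sum_add_distrib]
    simp [Finset.sum_const, Finset.card_univ, mul_comm]
  rw [hRHS, condMI, hAB, hABC, hBm, hBCm]
  field_simp
  ring

end Part3mix
section Part3main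
variable {Ω 𝒜 𝒞 𝒳₁ 𝒳₂ : Type*} {n r : ℕ}
    [Fintype Ω] [Fintype 𝒜] [Fintype 𝒞] [Fintype 𝒳₁] [Fintype 𝒳₂]
    [DecidableEq 𝒜] [DecidableEq 𝒞] [DecidableEq 𝒳₁] [DecidableEq 𝒳₂]

set_option maxHeartbeats 2000000 in
lemma part3 (hn : 0 < n) (μ : Ω → ℝ) (hμ : IsPMF μ)
    (G : Ω → 𝒜) (C : Fin r → Ω → 𝒞)
    (X1 : Ω → Fin n → 𝒳₁) (X2 : Ω → Fin n → 𝒳₂)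
    (p : 𝒳₁ × 𝒳₂ → ℝ) (hp : IsPMF p)
    (hiid : pushf μ (fun ω => (G ω, fun q => (X1 ω q, X2 ω q)))
      = fun z => pushf μ G z.1 * ∏ q, p (z.2 q)) :
    condMI μ (fun ω => (G ω, fun i : Fin r => C i ω)) X2 X1
        ≥ n * condMI (fun z : Fin n × Ω => μ z.2 / n)
            (fun z => (((G z.2, (fun i : Fin r => C i z.2)),
              ((fun j : Fin n => if z.1 < j then some (X1 z.2 j) else none),
               (fun j : Fin n => if j < z.1 then some (X2 z.2 j) else none))), z.1))
            (fun z => X2 z.2 z.1) (fun z => X1 z.2 z.1) := by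
  have hμ0 := hμ.1
  have hμ1 := hμ.2
  rw [ge_iff_le, part2 μ hμ G C X1 X2 p hp hiid]
  have hmix := condMI_mix hn hμ1
    (fun z : Fin n × Ω => (((G z.2, (fun i : Fin r => C i z.2)),
      ((fun j : Fin n => if z.1 < j then some (X1 z.2 j) else none),
       (fun j : Fin n => if j < z.1 then some (X2 z.2 j) else none))), z.1))
    (fun z : Fin n × Ω => X2 z.2 z.1) (fun z : Fin n × Ω => X1 z.2 z.1)
    (fun w => w.2) (fun z => rfl)
    (pushf p (fun x => x.2)) (fun q => pushf_atq hμ hp hiid q (fun x => x.2))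
    (pushf p (fun x => (x.2, x.1))) (fun q => pushf_atq hμ hp hiid q (fun x => (x.2, x.1)))
  rw [hmix]
  refine Finset.sum_le_sum fun q _ => ?_
  show condMI μ
      (fun ω => (((G ω, (fun i : Fin r => C i ω)),
        ((fun j : Fin n => if q < j then some (X1 ω j) else none),
         (fun j : Fin n => if j < q then some (X2 ω j) else none))), q))
      (fun ω => X2 ω q) (fun ω => X1 ω q)
    ≤ condMI μ
        (fun ω => ((G ω, (fun i : Fin r => C i ω)),
          ((fun j : {j : Fin n // q < j} => X1 ω j.1),
           (fun j : {j : Fin n // j ≠ q} => X2 ω j.1))))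
        (fun ω => X2 ω q) (fun ω => X1 ω q)
  have hfe : (fun ω : Ω => (((G ω, (fun i : Fin r => C i ω)),
        ((fun j : Fin n => if q < j then some (X1 ω j) else none),
         (fun j : Fin n => if j < q then some (X2 ω j) else none))), q))
      = fun ω =>
          (fun w : (𝒜 × (Fin r → 𝒞)) × (({j : Fin n // q < j} → 𝒳₁) × ({j : Fin n // j ≠ q} → 𝒳₂)) =>
            ((w.1, ((fun j : Fin n => if h : q < j then some (w.2.1 ⟨j, h⟩) else none),
              (fun j : Fin n => if h : j < q then some (w.2.2 ⟨j, ne_of_lt h⟩) else none))), q))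
          ((fun ω => ((G ω, (fun i : Fin r => C i ω)),
            ((fun j : {j : Fin n // q < j} => X1 ω j.1),
             (fun j : {j : Fin n // j ≠ q} => X2 ω j.1)))) ω) := by
    funext ω
    refine Prod.ext (Prod.ext rfl (Prod.ext ?_ ?_)) rfl
    · funext j
      show (if q < j then some (X1 ω j) else none)
        = if h : q < j then some (X1 ω j) else none
      by_cases h : q < j
      · rw [if_pos h, dif_pos h]
      · rw [if_neg h, dif_neg h]
    · funext j
      show (if j < q then some (X2 ω j) else none)
        = if h : j < q then some (X2 ω j) else none
      by_cases h : j < q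
      · rw [if_pos h, dif_pos h]
      · rw [if_neg h, dif_neg h]
  rw [hfe]
  exact condMI_data_proc hμ0 hμ1
    (fun ω => ((G ω, (fun i : Fin r => C i ω)),
      ((fun j : {j : Fin n // q < j} => X1 ω j.1),
       (fun j : {j : Fin n // j ≠ q} => X2 ω j.1))))
    (fun ω => X2 ω q) (fun ω => X1 ω q)
    (fun w : (𝒜 × (Fin r → 𝒞)) × (({j : Fin n // q < j} → 𝒳₁) × ({j : Fin n // j ≠ q} → 𝒳₂)) =>
      ((w.1, ((fun j : Fin n => if h : q < j then some (w.2.1 ⟨j, h⟩) else none),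
        (fun j : Fin n => if h : j < q then some (w.2.2 ⟨j, ne_of_lt h⟩) else none))), q))

end Part3main
set_option maxHeartbeats 1000000 in
/-- with `G` common randomness independent of the i.i.d. sources
`(X_1^n, X_2^n)`, and the interactive Markov structure, the chain of (in)equalities
`∑_{i odd} H(C_i) ≥ I(G C_{[1:r]}; X_1^n | X_2^n)
  = ∑_q I(G C_{[1:r]} X_1^{q+1:n} X_{2,∼q}; X_{1,q} | X_{2,q})
  ≥ n·I(F_{[1:r]}; X_1 | X_2)` holds, where (on the extended space `Fin n × Ω` with
`Q = ` first coordinate uniform and independent) `F_{[1:r]}` is jointly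
`(G, C_{[1:r]}, X_1^{Q+1:n}, X_2^{1:Q-1}, Q)` (sequences encoded with `Option`-padding),
`X_1 := X_{1,Q}`, `X_2 := X_{2,Q}`. Paper-odd rounds are 0-indexed `Even i.val`. -/
theorem rate_bound_R12 {Ω 𝒜 𝒞 𝒳₁ 𝒳₂ : Type*} {n r : ℕ}
    [Fintype Ω] [Fintype 𝒜] [Fintype 𝒞] [Fintype 𝒳₁] [Fintype 𝒳₂]
    [DecidableEq 𝒜] [DecidableEq 𝒞] [DecidableEq 𝒳₁] [DecidableEq 𝒳₂]
    (hn : 0 < n)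
    (μ : Ω → ℝ) (hμ : IsPMF μ)
    (G : Ω → 𝒜) (C : Fin r → Ω → 𝒞)
    (X1 : Ω → Fin n → 𝒳₁) (X2 : Ω → Fin n → 𝒳₂)
    (p : 𝒳₁ × 𝒳₂ → ℝ) (hp : IsPMF p)
    (hiid : pushf μ (fun ω => (G ω, fun q => (X1 ω q, X2 ω q)))
      = fun z => pushf μ G z.1 * ∏ q, p (z.2 q))
    (hodd : ∀ i : Fin r, Even i.val →
      condMI μ (C i)
        (fun ω => (G ω, (fun j : Fin i.val => C (Fin.castLE i.isLt.le j) ω), X1 ω))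
        X2 = 0)
    (heven : ∀ i : Fin r, Odd i.val →
      condMI μ (C i)
        (fun ω => (G ω, (fun j : Fin i.val => C (Fin.castLE i.isLt.le j) ω), X2 ω))
        X1 = 0) :
    (∑ i ∈ Finset.univ.filter (fun i : Fin r => Even i.val), Hent μ (C i)
        ≥ condMI μ (fun ω => (G ω, fun i : Fin r => C i ω)) X2 X1) ∧
    (condMI μ (fun ω => (G ω, fun i : Fin r => C i ω)) X2 X1
        = ∑ q : Fin n,
            condMI μ
              (fun ω => ((G ω, (fun i : Fin r => C i ω)),
                ((fun j : {j : Fin n // q < j} => X1 ω j.1),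
                 (fun j : {j : Fin n // j ≠ q} => X2 ω j.1))))
              (fun ω => X2 ω q) (fun ω => X1 ω q)) ∧
    (condMI μ (fun ω => (G ω, fun i : Fin r => C i ω)) X2 X1
        ≥ n * condMI (fun z : Fin n × Ω => μ z.2 / n)
            (fun z => (((G z.2, (fun i : Fin r => C i z.2)),
              ((fun j : Fin n => if z.1 < j then some (X1 z.2 j) else none),
               (fun j : Fin n => if j < z.1 then some (X2 z.2 j) else none))), z.1))
            (fun z => X2 z.2 z.1) (fun z => X1 z.2 z.1)) := by
  exact ⟨part1 μ hμ G C X1 X2 p hp hiid heven,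
    part2 μ hμ G C X1 X2 p hp hiid,
    part3 hn μ hμ G C X1 X2 p hp hiid⟩
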